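/- arXiv:1403.1884 — 2 statements merged into one kernel-verified Lean document; each statement's English description precedes it below -/
import Mathlib

section
/- Kummer's transformation: for a, b ∈ ℂ with b not a nonpositive integer, the identity ₁F₁(a; b; −z) = e^{−z} · ₁F₁(b−a; b; z) holds as an identity of formal (or entire) power series in z. -/
open PowerSeries

/-- Pochhammer symbol `(a)_k = a (a+1) ⋯ (a+k−1)` in `ℂ`. -/
noncomputable def poch (a : ℂ) (k : ℕ) : ℂ := (ascPochhammer ℂ k).eval a

/-- Kummer confluent hypergeometric series `₁F₁(a;b;sz)` as a formal power series in `z`. -/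
noncomputable def F1 (a b s : ℂ) : PowerSeries ℂ :=
  PowerSeries.mk fun k => poch a k / poch b k * s ^ k / (k.factorial : ℂ)

/-- Formal derivative of a power series. -/
noncomputable def D (f : PowerSeries ℂ) : PowerSeries ℂ := f.derivativeFun

/-- The exponential series `e^{tz}` as a formal power series in `z`. -/
noncomputable def Exp (t : ℂ) : PowerSeries ℂ :=
  PowerSeries.mk fun k => t ^ k / (k.factorial : ℂ)

lemma poch_zero (x : ℂ) : poch x 0 = 1 := by simp [poch]

lemma poch_succ_right (x : ℂ) (n : ℕ) : poch x (n+1) = poch x n * (x + n) := by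
  simp [poch, ascPochhammer_succ_right]

lemma poch_succ_left (x : ℂ) (n : ℕ) : poch x (n+1) = x * poch (x+1) n := by
  simp [poch, ascPochhammer_succ_left, Polynomial.eval_comp]

lemma poch_add (x : ℂ) (m k : ℕ) : poch x (m + k) = poch x m * poch (x + m) k := by
  rw [poch, ← ascPochhammer_mul]
  simp [poch, Polynomial.eval_comp]

open Finset in
lemma key : ∀ (n : ℕ) (a b : ℂ),
    ∑ k ∈ range (n+1), (n.choose k : ℂ) * (-1)^k * poch (b-a) k * poch (b + (k:ℂ)) (n-k)
      = poch a n := by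
  intro n
  induction n with
  | zero => intro a b; simp [poch_zero]
  | succ n ih =>
    intro a b
    have hG := ih a b
    have hH : ∑ k ∈ range (n+1),
        (n.choose k : ℂ) * (-1)^k * poch (b-a) k * poch (b + 1 + (k:ℂ)) (n-k)
          = poch (a+1) n := by
      have h := ih (a+1) (b+1)
      rwa [show b + 1 - (a+1) = b - a by ring] at h
    rw [Finset.sum_range_succ']
    have step : ∀ i ∈ range (n+1),
        ((n+1).choose (i+1) : ℂ) * (-1)^(i+1) * poch (b-a) (i+1)
            * poch (b + ((i+1 : ℕ):ℂ)) (n+1-(i+1))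
        = (-(b+(n:ℂ))) * ((n.choose i : ℂ) * (-1)^i * poch (b-a) i * poch (b + (i:ℂ)) (n-i))
          + a * ((n.choose i : ℂ) * (-1)^i * poch (b-a) i * poch (b + 1 + (i:ℂ)) (n-i))
          + (n.choose (i+1) : ℂ) * (-1)^(i+1) * poch (b-a) (i+1)
              * poch (b + ((i+1 : ℕ):ℂ)) (n+1-(i+1)) := by
      intro i hi
      have hin : i ≤ n := by simpa [Nat.lt_succ_iff] using hi
      have e1 : n + 1 - (i+1) = n - i := by omega
      have e2 : ((i+1 : ℕ):ℂ) = (i:ℂ)+1 := by push_cast; ring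
      have e3 : ((n - i : ℕ):ℂ) = (n:ℂ) - i := by
        rw [Nat.cast_sub hin]
      rw [e1, e2, show b + ((i:ℂ)+1) = b + 1 + (i:ℂ) by ring,
        Nat.choose_succ_succ n i, Nat.cast_add, poch_succ_right (b-a) i]
      have hbk : (b + (i:ℂ)) * poch (b + 1 + (i:ℂ)) (n-i)
          = poch (b + (i:ℂ)) (n-i) * (b + (n:ℂ)) := by
        have h2 := poch_succ_left (b + (i:ℂ)) (n-i)
        have h3 := poch_succ_right (b + (i:ℂ)) (n-i)
        rw [show b + (i:ℂ) + 1 = b + 1 + (i:ℂ) by ring] at h2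
        rw [e3] at h3
        rw [← h2, h3]; ring
      linear_combination (-((n.choose i : ℂ) * (-1)^i * poch (b-a) i)) * hbk
    rw [Finset.sum_congr rfl step, Finset.sum_add_distrib, Finset.sum_add_distrib,
      ← Finset.mul_sum, ← Finset.mul_sum, hG, hH]
    have hB : (∑ i ∈ range (n+1), (n.choose (i+1):ℂ) * (-1)^(i+1) * poch (b-a) (i+1)
          * poch (b + ((i+1:ℕ):ℂ)) (n+1-(i+1)))
        + ((n+1).choose 0 : ℂ) * (-1)^0 * poch (b-a) 0 * poch (b + ((0:ℕ):ℂ)) (n+1-0)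
        = (b+(n:ℂ)) * poch a n := by
      have h0 : ((n+1).choose 0 : ℂ) * (-1)^0 * poch (b-a) 0 * poch (b + ((0:ℕ):ℂ)) (n+1-0)
          = (n.choose 0 : ℂ) * (-1)^0 * poch (b-a) 0 * poch (b + ((0:ℕ):ℂ)) (n+1-0) := by
        simp
      rw [h0, ← Finset.sum_range_succ'
        (fun j => (n.choose j : ℂ) * (-1)^j * poch (b-a) j * poch (b + (j:ℂ)) (n+1-j)) (n+1),
        Finset.sum_range_succ]
      have hz : (n.choose (n+1) : ℂ) * (-1)^(n+1) * poch (b-a) (n+1)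
          * poch (b + ((n+1:ℕ):ℂ)) (n+1-(n+1)) = 0 := by
        simp [Nat.choose_succ_self]
      rw [hz, add_zero]
      have step2 : ∀ j ∈ range (n+1),
          (n.choose j : ℂ) * (-1)^j * poch (b-a) j * poch (b + (j:ℂ)) (n+1-j)
          = ((n.choose j : ℂ) * (-1)^j * poch (b-a) j * poch (b + (j:ℂ)) (n-j)) * (b+(n:ℂ)) := by
        intro j hj
        have hjn : j ≤ n := by simpa [Nat.lt_succ_iff] using hj
        have e4 : n + 1 - j = (n - j) + 1 := by omega
        have e5 : ((n - j : ℕ):ℂ) = (n:ℂ) - j := by rw [Nat.cast_sub hjn]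
        rw [e4, poch_succ_right, e5]; ring
      rw [Finset.sum_congr rfl step2, ← Finset.sum_mul, hG]; ring
    rw [add_assoc, hB, poch_succ_left]; ring


open Finset

/-- Kummer's transformation `₁F₁(a;b;−z) = e^{−z} ₁F₁(b−a;b;z)`. -/
theorem stmt_6 (a b : ℂ) (hb : ∀ k : ℕ, b + k ≠ 0) :
    F1 a b (-1) = Exp (-1) * F1 (b - a) b 1 := by
  have hpoch : ∀ k : ℕ, poch b k ≠ 0 := by
    intro k
    induction k with
    | zero => simp [poch_zero]
    | succ k ihk => rw [poch_succ_right]; exact mul_ne_zero ihk (hb k)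
  ext n
  rw [PowerSeries.coeff_mul, Finset.Nat.sum_antidiagonal_eq_sum_range_succ_mk]
  simp only [F1, Exp, PowerSeries.coeff_mk, one_pow, mul_one]
  have hfacn : ((n.factorial : ℂ)) ≠ 0 := Nat.cast_ne_zero.mpr (Nat.factorial_ne_zero n)
  have hsum : ∀ i ∈ range (n+1),
      (-1:ℂ)^i / (i.factorial : ℂ) * (poch (b-a) (n-i) / poch b (n-i) / ((n-i).factorial : ℂ))
      = ((-1:ℂ)^i * (n.choose i : ℂ) * poch (b-a) (n-i) * poch (b + ((n-i:ℕ):ℂ)) i)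
        / (poch b n * (n.factorial : ℂ)) := by
    intro i hi
    have hin : i ≤ n := by simpa [Nat.lt_succ_iff] using hi
    have hb1 : poch b n = poch b (n-i) * poch (b + ((n-i:ℕ):ℂ)) i := by
      have h := poch_add b (n-i) i
      rwa [Nat.sub_add_cancel hin] at h
    have hfac : ((n.factorial : ℕ) : ℂ)
        = (n.choose i : ℂ) * (i.factorial : ℂ) * ((n-i).factorial : ℂ) := by
      exact_mod_cast (congrArg (Nat.cast (R := ℂ))
        (Nat.choose_mul_factorial_mul_factorial hin)).symm
    have h2 : poch (b + ((n-i:ℕ):ℂ)) i ≠ 0 := by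
      intro h; apply hpoch n; rw [hb1, h, mul_zero]
    have h3 : poch b (n-i) ≠ 0 := hpoch _
    have h4 : ((i.factorial : ℕ) : ℂ) ≠ 0 := Nat.cast_ne_zero.mpr (Nat.factorial_ne_zero i)
    have h5 : (((n-i).factorial : ℕ) : ℂ) ≠ 0 := Nat.cast_ne_zero.mpr (Nat.factorial_ne_zero _)
    have h6 : ((n.choose i : ℕ) : ℂ) ≠ 0 := Nat.cast_ne_zero.mpr (Nat.choose_pos hin).ne'
    have h2' : poch (b + ((n:ℂ) - i)) i ≠ 0 := by rwa [Nat.cast_sub hin] at h2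
    rw [hb1, hfac]
    field_simp
  rw [Finset.sum_congr rfl hsum, ← Finset.sum_div]
  have hkey2 : ∑ i ∈ range (n+1),
      (-1:ℂ)^i * (n.choose i : ℂ) * poch (b-a) (n-i) * poch (b + ((n-i:ℕ):ℂ)) i
      = (-1)^n * poch a n := by
    rw [← Finset.sum_range_reflect]
    have step3 : ∀ i ∈ range (n+1),
        (-1:ℂ)^(n+1-1-i) * (n.choose (n+1-1-i) : ℂ) * poch (b-a) (n-(n+1-1-i))
            * poch (b + ((n-(n+1-1-i):ℕ):ℂ)) (n+1-1-i)
        = (-1:ℂ)^n * ((n.choose i : ℂ) * (-1)^i * poch (b-a) i * poch (b + (i:ℂ)) (n-i)) := by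
      intro i hi
      have hin : i ≤ n := by simpa [Nat.lt_succ_iff] using hi
      have e1 : n + 1 - 1 - i = n - i := by omega
      have e2 : n - (n - i) = i := by omega
      have e3 : (n.choose (n-i) : ℂ) = (n.choose i : ℂ) := by
        rw [Nat.choose_symm hin]
      have e4 : (-1:ℂ)^(n-i) = (-1)^n * (-1)^i := by
        have h5 : (-1:ℂ)^(n-i) * (-1)^i = (-1)^n := by
          rw [← pow_add, Nat.sub_add_cancel hin]
        have h6 : (-1:ℂ)^i * (-1)^i = 1 := by
          rw [← pow_add, ← two_mul, pow_mul]; norm_num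
        calc (-1:ℂ)^(n-i) = (-1:ℂ)^(n-i) * ((-1:ℂ)^i * (-1)^i) := by rw [h6, mul_one]
          _ = (-1:ℂ)^n * (-1)^i := by rw [← mul_assoc, h5]
      rw [e1, e2, e3, e4]; ring
    rw [Finset.sum_congr rfl step3, ← Finset.mul_sum, key n a b]
  rw [hkey2]
  field_simp
end

section
/- Let α, γ, δ, ε ∈ ℂ with ε ≠ 0 and suppose α/ε = −N for a nonnegative integer N, with γ not a nonpositive integer. Define a_n by the recurrence R_n a_n + Q_{n−1}a_{n−1} + P_{n−2}a_{n−2} = 0, a_0 = 1, where R_n = −n(γ+n−1), Q_n = n(γ+n−1) − q, P_n = −δ(α+εn)/(γ+n). Then P_N = 0, and the condition a_{N+1} = 0 is a polynomial equation of degree N+1 in the accessory parameter q. -/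
open PowerSeries

theorem stmt_9 (α γ δ ε : ℂ) (hε : ε ≠ 0) (N : ℕ) (hα : α / ε = -(N : ℂ))
    (hγ : ∀ k : ℕ, γ + k ≠ 0)
    (R : ℕ → ℂ) (Q : ℂ → ℕ → ℂ) (P : ℕ → ℂ)
    (hR : ∀ n : ℕ, R n = -(n : ℂ) * (γ + n - 1))
    (hQ : ∀ q : ℂ, ∀ n : ℕ, Q q n = (n : ℂ) * (γ + n - 1) - q)
    (hP : ∀ n : ℕ, P n = -δ * (α + ε * n) / (γ + n))
    (a : ℂ → ℕ → ℂ) (ha0 : ∀ q : ℂ, a q 0 = 1)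
    (hrec1 : ∀ q : ℂ, R 1 * a q 1 + Q q 0 * a q 0 = 0)
    (hrec : ∀ q : ℂ, ∀ n : ℕ,
      R (n + 2) * a q (n + 2) + Q q (n + 1) * a q (n + 1) + P n * a q n = 0) :
    P N = 0 ∧
      ∃ p : Polynomial ℂ, p.degree = (N + 1 : ℕ) ∧ ∀ q : ℂ, p.eval q = a q (N + 1) := by
  have hγ0 : γ ≠ 0 := by simpa using hγ 0
  have hαε : α = -(N : ℂ) * ε := (div_eq_iff hε).mp hα
  have hPN : P N = 0 := by
    rw [hP, hαε]; ring_nf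
  refine ⟨hPN, ?_⟩
  have hRne : ∀ n : ℕ, R (n + 2) ≠ 0 := by
    intro n
    rw [hR]
    push_cast
    apply mul_ne_zero
    · intro h
      have : ((n : ℂ) + 2) = 0 := by linear_combination -h
      have h2 : ((n + 2 : ℕ) : ℂ) = 0 := by push_cast; linear_combination this
      exact (Nat.cast_ne_zero.mpr (by omega)) h2
    · have := hγ (n + 1)
      push_cast at this
      intro h
      exact this (by linear_combination h)
  have key : ∀ n : ℕ, ∃ p p' : Polynomial ℂ,
      p.degree = n ∧ p'.degree = (n + 1 : ℕ) ∧
      (∀ q, p.eval q = a q n) ∧ (∀ q, p'.eval q = a q (n + 1)) := by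
    intro n
    induction n with
    | zero =>
      refine ⟨1, Polynomial.C (-γ⁻¹) * Polynomial.X, Polynomial.degree_one, ?_, ?_, ?_⟩
      · simpa using Polynomial.degree_C_mul_X (neg_ne_zero.mpr (inv_ne_zero hγ0))
      · intro q; simpa using (ha0 q).symm
      · intro q
        have h := hrec1 q
        rw [hR, hQ, ha0] at h
        simp only [Polynomial.eval_mul, Polynomial.eval_C, Polynomial.eval_X]
        push_cast at h
        have hg : γ * a q 1 = -q := by linear_combination -h
        field_simp
        linear_combination -hg
    | succ n ih =>
      obtain ⟨p, p', hdp, hdp', hep, hep'⟩ := ih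
      refine ⟨p', Polynomial.C (R (n + 2))⁻¹ *
        (-((Polynomial.C (((n : ℂ) + 1) * (γ + n)) - Polynomial.X) * p'
            + Polynomial.C (P n) * p)), hdp', ?_, hep', ?_⟩
      · have hdeg1 : (Polynomial.C (((n : ℂ) + 1) * (γ + n)) - Polynomial.X).degree = 1 := by
          rw [show Polynomial.C (((n : ℂ) + 1) * (γ + n)) - Polynomial.X
              = -(Polynomial.X - Polynomial.C (((n : ℂ) + 1) * (γ + n))) by ring,
            Polynomial.degree_neg, Polynomial.degree_X_sub_C]
        have hdegA : ((Polynomial.C (((n : ℂ) + 1) * (γ + n)) - Polynomial.X) * p').degree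
            = ((n + 2 : ℕ) : WithBot ℕ) := by
          rw [Polynomial.degree_mul, hdeg1, hdp', ← Nat.cast_one (R := WithBot ℕ),
            ← Nat.cast_add]
          exact congrArg _ (by omega)
        have hdegB : (Polynomial.C (P n) * p).degree < ((n + 2 : ℕ) : WithBot ℕ) := by
          calc (Polynomial.C (P n) * p).degree
              ≤ (Polynomial.C (P n)).degree + p.degree := Polynomial.degree_mul_le _ _
            _ ≤ 0 + (n : WithBot ℕ) := add_le_add Polynomial.degree_C_le (le_of_eq hdp)
            _ = (n : WithBot ℕ) := zero_add _
            _ < ((n + 2 : ℕ) : WithBot ℕ) := by exact_mod_cast Nat.lt_add_of_pos_right two_pos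
        rw [Polynomial.degree_C_mul (inv_ne_zero (hRne n)), Polynomial.degree_neg,
          Polynomial.degree_add_eq_left_of_degree_lt (by rw [hdegA]; exact hdegB), hdegA]
      · intro q
        have h := hrec q n
        have hR2 := hRne n
        simp only [Polynomial.eval_mul, Polynomial.eval_C, Polynomial.eval_neg,
          Polynomial.eval_add, Polynomial.eval_sub, Polynomial.eval_X, hep, hep']
        rw [hQ] at h
        show _ = a q (n + 2)
        rw [inv_mul_eq_iff_eq_mul₀ hR2]
        push_cast at h ⊢
        linear_combination -h
  obtain ⟨p, p', _, hdp', _, hep'⟩ := key N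
  exact ⟨p', hdp', hep'⟩
end
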